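/- For vectors κ in the positive cone Γ₊ ⊂ ℝⁿ, the function σ₂(κ) = (H₂(κ))^{1/2}, where H₂ = Σ_{i<j} κ_i κ_j (the second elementary symmetric polynomial), is concave on Γ₊. -/
import Mathlib

open Finset

lemma pair_sum_eq (n : ℕ) (x y : Fin n → ℝ) :
    ∑ p ∈ Finset.univ.filter (fun p : Fin n × Fin n => p.1 < p.2),
      (x p.1 * y p.2 + y p.1 * x p.2)
    = (∑ i, x i) * (∑ i, y i) - ∑ i, x i * y i := by
  classical
  have htot : (∑ p : Fin n × Fin n, x p.1 * y p.2) = (∑ i, x i) * (∑ i, y i) := by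
    rw [Fintype.sum_prod_type, Finset.sum_mul]
    exact Finset.sum_congr rfl fun i _ => by rw [Finset.mul_sum]
  have hsplit : (∑ p : Fin n × Fin n, x p.1 * y p.2)
      = (∑ p ∈ Finset.univ.filter (fun p : Fin n × Fin n => p.1 < p.2), x p.1 * y p.2)
      + ((∑ p ∈ (Finset.univ.filter (fun p : Fin n × Fin n => ¬ p.1 < p.2)).filter
            (fun p : Fin n × Fin n => p.2 < p.1), x p.1 * y p.2)
        + (∑ p ∈ (Finset.univ.filter (fun p : Fin n × Fin n => ¬ p.1 < p.2)).filter
            (fun p : Fin n × Fin n => ¬ p.2 < p.1), x p.1 * y p.2)) := by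
    rw [← Finset.sum_filter_add_sum_filter_not Finset.univ (fun p : Fin n × Fin n => p.1 < p.2),
      ← Finset.sum_filter_add_sum_filter_not
        (Finset.univ.filter (fun p : Fin n × Fin n => ¬ p.1 < p.2))
        (fun p : Fin n × Fin n => p.2 < p.1)]
  have hgt : (∑ p ∈ (Finset.univ.filter (fun p : Fin n × Fin n => ¬ p.1 < p.2)).filter
        (fun p : Fin n × Fin n => p.2 < p.1), x p.1 * y p.2)
      = ∑ p ∈ Finset.univ.filter (fun p : Fin n × Fin n => p.1 < p.2), y p.1 * x p.2 := by
    apply Finset.sum_nbij' (fun p => Prod.swap p) (fun p => Prod.swap p) <;>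
      simp +contextual [lt_iff_le_and_ne, le_of_lt, mul_comm]
  have hdiag : (∑ p ∈ (Finset.univ.filter (fun p : Fin n × Fin n => ¬ p.1 < p.2)).filter
        (fun p : Fin n × Fin n => ¬ p.2 < p.1), x p.1 * y p.2)
      = ∑ i, x i * y i := by
    apply Finset.sum_nbij' (fun p => p.1) (fun i => (i, i))
    · intro p hp
      simp at hp ⊢
    · intro i hi; simp
    · intro p hp
      simp only [Finset.mem_filter, not_lt] at hp
      have : p.1 = p.2 := le_antisymm hp.2 hp.1.2
      exact Prod.ext rfl this
    · intro i hi; rfl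
    · intro p hp
      simp only [Finset.mem_filter, not_lt] at hp
      have : p.1 = p.2 := le_antisymm hp.2 hp.1.2
      simp [this]
  rw [hgt, hdiag] at hsplit
  rw [Finset.sum_add_distrib]
  linarith [htot, hsplit]

/-- Reverse Cauchy–Schwarz for the hyperbolic form. -/
lemma rev_cs (Sx Sy Nx Ny P : ℝ) (hSx : 0 ≤ Sx) (hSy : 0 ≤ Sy)
    (hNx : 0 ≤ Nx) (hNy : 0 ≤ Ny) (hx : Nx ≤ Sx ^ 2) (hy : Ny ≤ Sy ^ 2)
    (hP : P ^ 2 ≤ Nx * Ny) :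
    Real.sqrt ((Sx ^ 2 - Nx) * (Sy ^ 2 - Ny)) ≤ Sx * Sy - P := by
  have hnx := Real.sqrt_nonneg Nx
  have hny := Real.sqrt_nonneg Ny
  have hnx2 : Real.sqrt Nx ^ 2 = Nx := Real.sq_sqrt hNx
  have hny2 : Real.sqrt Ny ^ 2 = Ny := Real.sq_sqrt hNy
  have hxle : Real.sqrt Nx ≤ Sx := by
    nlinarith [Real.sqrt_nonneg Nx]
  have hyle : Real.sqrt Ny ≤ Sy := by
    nlinarith [Real.sqrt_nonneg Ny]
  have hPle : P ≤ Real.sqrt Nx * Real.sqrt Ny := by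
    calc P ≤ |P| := le_abs_self P
      _ = Real.sqrt (P ^ 2) := (Real.sqrt_sq_eq_abs P).symm
      _ ≤ Real.sqrt (Nx * Ny) := Real.sqrt_le_sqrt hP
      _ = Real.sqrt Nx * Real.sqrt Ny := Real.sqrt_mul hNx Ny
  have h0 : 0 ≤ Sx * Sy - Real.sqrt Nx * Real.sqrt Ny := by nlinarith
  have key : (Sx ^ 2 - Nx) * (Sy ^ 2 - Ny) ≤ (Sx * Sy - Real.sqrt Nx * Real.sqrt Ny) ^ 2 := by
    nlinarith [sq_nonneg (Sx * Real.sqrt Ny - Sy * Real.sqrt Nx)]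
  calc Real.sqrt ((Sx ^ 2 - Nx) * (Sy ^ 2 - Ny))
      ≤ Real.sqrt ((Sx * Sy - Real.sqrt Nx * Real.sqrt Ny) ^ 2) := Real.sqrt_le_sqrt key
    _ = Sx * Sy - Real.sqrt Nx * Real.sqrt Ny := by rw [Real.sqrt_sq h0]
    _ ≤ Sx * Sy - P := by linarith

lemma concl_step (A B C t : ℝ) (hA : 0 ≤ A) (hC : 0 ≤ C) (ht0 : 0 ≤ t) (ht1 : t ≤ 1)
    (hB : 2 * (Real.sqrt A * Real.sqrt C) ≤ B) :
    t * Real.sqrt A + (1 - t) * Real.sqrt C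
      ≤ Real.sqrt (t ^ 2 * A + t * (1 - t) * B + (1 - t) ^ 2 * C) := by
  have ha := Real.sq_sqrt hA
  have hc := Real.sq_sqrt hC
  have ht1' : 0 ≤ 1 - t := by linarith
  have hnn : 0 ≤ t * Real.sqrt A + (1 - t) * Real.sqrt C :=
    add_nonneg (mul_nonneg ht0 (Real.sqrt_nonneg _)) (mul_nonneg ht1' (Real.sqrt_nonneg _))
  have hsq : (t * Real.sqrt A + (1 - t) * Real.sqrt C) ^ 2
      ≤ t ^ 2 * A + t * (1 - t) * B + (1 - t) ^ 2 * C := by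
    nlinarith [mul_nonneg ht0 ht1']
  calc t * Real.sqrt A + (1 - t) * Real.sqrt C
      = Real.sqrt ((t * Real.sqrt A + (1 - t) * Real.sqrt C) ^ 2) := (Real.sqrt_sq hnn).symm
    _ ≤ Real.sqrt (t ^ 2 * A + t * (1 - t) * B + (1 - t) ^ 2 * C) := Real.sqrt_le_sqrt hsq

/-- σ₂ = √H₂ is concave on the positive cone Γ₊. -/
theorem sigma2_concave (n : ℕ) (hn : 2 ≤ n)
    (κ lam : Fin n → ℝ) (hκ : ∀ i, 0 < κ i) (hlam : ∀ i, 0 < lam i)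
    (t : ℝ) (ht0 : 0 ≤ t) (ht1 : t ≤ 1) :
    t * Real.sqrt (∑ p ∈ Finset.univ.filter (fun p : Fin n × Fin n => p.1 < p.2),
        κ p.1 * κ p.2)
      + (1 - t) * Real.sqrt (∑ p ∈ Finset.univ.filter (fun p : Fin n × Fin n => p.1 < p.2),
        lam p.1 * lam p.2)
    ≤ Real.sqrt (∑ p ∈ Finset.univ.filter (fun p : Fin n × Fin n => p.1 < p.2),
        (t * κ p.1 + (1 - t) * lam p.1) * (t * κ p.2 + (1 - t) * lam p.2)) := by
  classical
  set S := Finset.univ.filter (fun p : Fin n × Fin n => p.1 < p.2) with hS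
  set A := ∑ p ∈ S, κ p.1 * κ p.2 with hA
  set C := ∑ p ∈ S, lam p.1 * lam p.2 with hC
  set B := ∑ p ∈ S, (κ p.1 * lam p.2 + lam p.1 * κ p.2) with hB
  -- nonnegativity
  have hApos : 0 ≤ A := Finset.sum_nonneg fun p _ => le_of_lt (mul_pos (hκ _) (hκ _))
  have hCpos : 0 ≤ C := Finset.sum_nonneg fun p _ => le_of_lt (mul_pos (hlam _) (hlam _))
  -- expansion of the mixed sum
  have hexp : ∑ p ∈ S, (t * κ p.1 + (1 - t) * lam p.1) * (t * κ p.2 + (1 - t) * lam p.2)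
      = t ^ 2 * A + t * (1 - t) * B + (1 - t) ^ 2 * C := by
    rw [hA, hB, hC, Finset.mul_sum, Finset.mul_sum, Finset.mul_sum,
      ← Finset.sum_add_distrib, ← Finset.sum_add_distrib]
    exact Finset.sum_congr rfl fun p _ => by ring
  -- express A, B, C via sums and norms
  have hAeq : 2 * A = (∑ i, κ i) * (∑ i, κ i) - ∑ i, κ i * κ i := by
    have h := pair_sum_eq n κ κ
    rw [← hS] at h
    rw [hA, two_mul, ← Finset.sum_add_distrib]
    exact h
  have hCeq : 2 * C = (∑ i, lam i) * (∑ i, lam i) - ∑ i, lam i * lam i := by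
    have h := pair_sum_eq n lam lam
    rw [← hS] at h
    rw [hC, two_mul, ← Finset.sum_add_distrib]
    exact h
  have hBeq : B = (∑ i, κ i) * (∑ i, lam i) - ∑ i, κ i * lam i := by
    have h := pair_sum_eq n κ lam
    rw [← hS] at h
    exact h
  -- reverse Cauchy–Schwarz: B ≥ 2 √A √C
  have hSκ : 0 ≤ ∑ i, κ i := Finset.sum_nonneg fun i _ => (hκ i).le
  have hSl : 0 ≤ ∑ i, lam i := Finset.sum_nonneg fun i _ => (hlam i).le
  have hNκ : 0 ≤ ∑ i, κ i * κ i := Finset.sum_nonneg fun i _ => mul_self_nonneg _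
  have hNl : 0 ≤ ∑ i, lam i * lam i := Finset.sum_nonneg fun i _ => mul_self_nonneg _
  have hCS : (∑ i, κ i * lam i) ^ 2 ≤ (∑ i, κ i * κ i) * ∑ i, lam i * lam i := by
    simpa [sq] using Finset.sum_mul_sq_le_sq_mul_sq Finset.univ κ lam
  have hrev := rev_cs (∑ i, κ i) (∑ i, lam i) (∑ i, κ i * κ i) (∑ i, lam i * lam i)
    (∑ i, κ i * lam i) hSκ hSl hNκ hNl (by rw [sq]; linarith) (by rw [sq]; linarith) hCS
  have h2A : (∑ i, κ i) ^ 2 - ∑ i, κ i * κ i = 2 * A := by rw [sq]; linarith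
  have h2C : (∑ i, lam i) ^ 2 - ∑ i, lam i * lam i = 2 * C := by rw [sq]; linarith
  rw [h2A, h2C, ← hBeq] at hrev
  have h4 : (2 * A) * (2 * C) = (2 * (Real.sqrt A * Real.sqrt C)) ^ 2 := by
    rw [mul_pow, mul_pow, Real.sq_sqrt hApos, Real.sq_sqrt hCpos]; ring
  have hBge : 2 * (Real.sqrt A * Real.sqrt C) ≤ B := by
    have hnn : 0 ≤ 2 * (Real.sqrt A * Real.sqrt C) := by positivity
    calc 2 * (Real.sqrt A * Real.sqrt C)
        = Real.sqrt ((2 * A) * (2 * C)) := by rw [h4, Real.sqrt_sq hnn]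
      _ ≤ B := hrev
  -- conclude
  rw [hexp]
  exact concl_step A B C t hApos hCpos ht0 ht1 hBge
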